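/- Let (R,m) be a Noetherian local ring, n ≥ 2, f_1,...,f_n, f ∈ m, J = (f_1,...,f_n), I = (J, f), J_i = (f_1,...,f_i), J_0 = 0. Assume that for all d ≥ 2 and all i = 1,...,n, ((J_{i-1}·I^{d-1} : f_i) ∩ I^{d-1}) / (J_{i-1}·I^{d-2}) = 0. Then for all d ≥ 2, E(I)_d ≅ (J·I^{d-1} : f^d)/(J·I^{d-2} : f^{d-1}). In particular, if J is a reduction of I, then rt(I) = rn_J(I) + 1. -/

import Mathlib

open Ideal Submodule

variable {R : Type*} [CommRing R]

/-- The linear map `(a₁,…,aₘ) ↦ Σ aⱼ zⱼ`. -/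
noncomputable def sumMul {m : ℕ} (z : Fin m → R) : (Fin m → R) →ₗ[R] R :=
  ∑ j, (LinearMap.proj j : (Fin m → R) →ₗ[R] R).smulRight (z j)

/-- The degree-`d` cycles of the Koszul complex of the degree-one elements
`z₁t,…,zₘt` on the Rees algebra of `I`. -/
noncomputable def kosZ1 {m : ℕ} (I : Ideal R) (z : Fin m → R) (d : ℕ) :
    Submodule R (Fin m → R) :=
  (⨅ j : Fin m, Submodule.comap (LinearMap.proj j) ((I ^ (d - 1) : Ideal R) : Submodule R R))
    ⊓ LinearMap.ker (sumMul z)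

/-- The degree-`d` boundaries of the Koszul complex of `z₁t,…,zₘt` on the Rees algebra
of `I`. -/
noncomputable def kosB1 {m : ℕ} (I : Ideal R) (z : Fin m → R) (d : ℕ) :
    Submodule R (Fin m → R) :=
  Submodule.span R {v | ∃ j l : Fin m, ∃ u ∈ I ^ (d - 2),
    v = Pi.single l (z j * u) - Pi.single j (z l * u)}

/-- The degree-`d` component of the first Koszul homology `H₁(z₁t,…,zₘt; R(I))`;
for the full sequence of generators of `I` this computes the `d`-th module of effective
relations `E(I)_d`. -/
noncomputable abbrev kosH1 {m : ℕ} (I : Ideal R) (z : Fin m → R) (d : ℕ) :=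
  ↥(kosZ1 I z d) ⧸ (Submodule.comap (kosZ1 I z d).subtype (kosB1 I z d))

/-- The quotient `A/B` of an ideal `A` by another ideal `B` (as `R`-modules). -/
noncomputable abbrev idealQuot {R : Type*} [CommRing R] (A B : Ideal R) :=
  ↥A ⧸ (Submodule.comap (Submodule.subtype (A : Submodule R R)) (B : Submodule R R))

/-- The ideal `J_k = (f₁,…,f_k)` generated by the first `k` elements of the sequence. -/
noncomputable def Jpart {n : ℕ} (z : Fin (n + 1) → R) (k : ℕ) : Ideal R :=
  Ideal.span (z '' {l : Fin (n + 1) | (l : ℕ) < k})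

/-- The reduction number of `I` with respect to `J`. -/
noncomputable def reductionNumber (J I : Ideal R) : ℕ :=
  sInf {r | I ^ (r + 1) = J * I ^ r}

/-- The relation type of `I`, computed through the vanishing of the modules of effective
relations: the smallest `L ≥ 1` such that `E(I)_d = H₁(z₁t,…,zₘt; R(I))_d = 0` for all
`d ≥ L + 1`, where `z` is a system of generators of `I`. -/
noncomputable def relationTypeKoszul {m : ℕ} (I : Ideal R) (z : Fin m → R) : ℕ :=
  sInf {L | 1 ≤ L ∧ ∀ d : ℕ, L + 1 ≤ d → kosZ1 I z d ≤ kosB1 I z d}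

lemma sumMul_apply {m : ℕ} (z : Fin m → R) (a : Fin m → R) :
    sumMul z a = ∑ j, a j * z j := by
  simp [sumMul, smul_eq_mul]

lemma mem_kosZ1 {m : ℕ} {I : Ideal R} {z : Fin m → R} {d : ℕ} {a : Fin m → R} :
    a ∈ kosZ1 I z d ↔ (∀ j, a j ∈ I ^ (d - 1)) ∧ ∑ j, a j * z j = 0 := by
  simp [kosZ1, Submodule.mem_iInf, LinearMap.mem_ker, sumMul_apply]

lemma boundary_mem {m : ℕ} {I : Ideal R} {z : Fin m → R} {d : ℕ} {u : R}
    (hu : u ∈ I ^ (d - 2)) (j l : Fin m) :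
    Pi.single l (z j * u) - Pi.single j (z l * u) ∈ kosB1 I z d :=
  Submodule.subset_span ⟨j, l, u, hu, rfl⟩

lemma mem_span_range_mul {m : ℕ} (v : Fin m → R) (K : Ideal R) {x : R}
    (hx : x ∈ Ideal.span (Set.range v) * K) :
    ∃ c : Fin m → R, (∀ j, c j ∈ K) ∧ x = ∑ j, v j * c j := by
  refine Submodule.mul_induction_on hx ?_ ?_
  · intro a ha b hb
    obtain ⟨c, hc⟩ := (mem_span_range_iff_exists_fun R).mp ha
    refine ⟨fun j => c j * b, fun j => K.mul_mem_left _ hb, ?_⟩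
    rw [← hc, Finset.sum_mul]
    exact Finset.sum_congr rfl fun j _ => by rw [smul_eq_mul]; ring
  · rintro x y ⟨c, hc, rfl⟩ ⟨c', hc', rfl⟩
    exact ⟨c + c', fun j => K.add_mem (hc j) (hc' j),
      by simp [mul_add, Finset.sum_add_distrib]⟩

lemma sum_mul_mem_span_range {m : ℕ} (v : Fin m → R) (K : Ideal R) {c : Fin m → R}
    (hc : ∀ j, c j ∈ K) : ∑ j, v j * c j ∈ Ideal.span (Set.range v) * K :=
  Submodule.sum_mem _ fun j _ =>
    Ideal.mul_mem_mul (Ideal.subset_span ⟨j, rfl⟩) (hc j)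

lemma mem_Jpart_mul {n : ℕ} (z : Fin (n + 1) → R) (k : ℕ) (hk : k ≤ n + 1)
    (K : Ideal R) {x : R} (hx : x ∈ Jpart z k * K) :
    ∃ c : Fin (n + 1) → R, (∀ j, c j ∈ K) ∧ (∀ j : Fin (n + 1), k ≤ (j : ℕ) → c j = 0) ∧
      x = ∑ j, z j * c j := by
  have himg : z '' {l : Fin (n + 1) | (l : ℕ) < k} =
      Set.range (fun j : Fin k => z (Fin.castLE hk j)) := by
    ext y
    constructor
    · rintro ⟨l, hl, rfl⟩
      exact ⟨⟨l.1, hl⟩, by congr 1⟩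
    · rintro ⟨j, rfl⟩
      exact ⟨Fin.castLE hk j, j.2, rfl⟩
  rw [Jpart, himg] at hx
  obtain ⟨c, hcK, hsum⟩ := mem_span_range_mul _ K hx
  classical
  refine ⟨fun j => if h : (j : ℕ) < k then c ⟨j, h⟩ else 0, ?_, ?_, ?_⟩
  · intro j; dsimp only; split
    · exact hcK _
    · exact K.zero_mem
  · intro j hj; dsimp only; rw [dif_neg (by omega)]
  · rw [hsum]
    have key : ∀ (m : ℕ) (hm : m ≤ n + 1) (w : Fin (n+1) → R),
        (∀ j : Fin (n+1), ¬ (j : ℕ) < k → w j = 0) →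
        (∀ (j : Fin (n+1)) (h : (j:ℕ) < k), w j = z (Fin.castLE hk ⟨j, h⟩) * c ⟨j, h⟩) →
        True := fun _ _ _ _ _ => trivial
    have e1 : ∀ j : Fin (n + 1),
        z j * (if h : (j : ℕ) < k then c ⟨j, h⟩ else 0) =
        (fun t : ℕ => if h : t < k then z (Fin.castLE hk ⟨t, h⟩) * c ⟨t, h⟩ else 0) (j : ℕ) := by
      intro j
      dsimp only
      by_cases h : (j : ℕ) < k
      · rw [dif_pos h, dif_pos h]
        exact congrArg (fun w => z w * c ⟨(j : ℕ), h⟩) (Fin.ext rfl)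
      · rw [dif_neg h, dif_neg h, mul_zero]
    have e2 : ∀ j : Fin k,
        z (Fin.castLE hk j) * c j =
        (fun t : ℕ => if h : t < k then z (Fin.castLE hk ⟨t, h⟩) * c ⟨t, h⟩ else 0) (j : ℕ) := by
      intro j
      dsimp only
      rw [dif_pos j.2]
    rw [Finset.sum_congr rfl (fun j _ => e1 j), Finset.sum_congr rfl (fun j _ => e2 j),
      Fin.sum_univ_eq_sum_range
        (fun t : ℕ => if h : t < k then z (Fin.castLE hk ⟨t, h⟩) * c ⟨t, h⟩ else 0) (n + 1),
      Fin.sum_univ_eq_sum_range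
        (fun t : ℕ => if h : t < k then z (Fin.castLE hk ⟨t, h⟩) * c ⟨t, h⟩ else 0) k]
    refine Finset.sum_subset (Finset.range_subset_range.mpr hk) ?_
    intro t _ ht
    rw [Finset.mem_range, not_lt] at ht
    rw [dif_neg (by omega)]

lemma pow_eq_aux (J : Ideal R) (f : R) (I : Ideal R) (hI : I = J ⊔ Ideal.span {f}) :
    ∀ k, I ^ (k + 1) = J * I ^ k ⊔ Ideal.span {f ^ (k + 1)} := by
  have hfI : Ideal.span {f} ≤ I := hI ▸ le_sup_right
  intro k
  induction k with
  | zero => simpa [Ideal.span_singleton_le_iff_mem] using hI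
  | succ k ih =>
    have hfI' : f ∈ I := hfI (Ideal.mem_span_singleton_self f)
    have h3 : Ideal.span {f ^ (k + 1)} * J ≤ J * I ^ (k + 1) := by
      rw [mul_comm]
      exact Ideal.mul_mono le_rfl
        ((Ideal.span_singleton_le_iff_mem _).mpr (pow_mem_pow hfI' (k + 1)))
    calc I ^ (k + 2) = (J * I ^ k ⊔ Ideal.span {f ^ (k + 1)}) * I := by
          rw [← ih]; ring
      _ = J * I ^ (k + 1) ⊔ Ideal.span {f ^ (k + 1)} * I := by
          rw [Ideal.sup_mul, mul_assoc, ← pow_succ]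
      _ = J * I ^ (k + 1) ⊔ (Ideal.span {f ^ (k + 1)} * J ⊔ Ideal.span {f ^ (k + 2)}) := by
          rw [hI, Ideal.mul_sup, Ideal.span_singleton_mul_span_singleton, ← pow_succ]
      _ = J * I ^ (k + 1) ⊔ Ideal.span {f ^ (k + 2)} := by
          rw [← sup_assoc]
          congr 1
          exact sup_eq_left.mpr h3

lemma single_dot {m : ℕ} (z : Fin m → R) (l : Fin m) (x : R) :
    ∑ j, (Pi.single l x : Fin m → R) j * z j = x * z l := by
  classical
  have : ∀ j, (Pi.single l x : Fin m → R) j * z j = if j = l then x * z j else 0 := by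
    intro j
    rw [Pi.single_apply]
    split <;> simp
  rw [Finset.sum_congr rfl fun j _ => this j, Finset.sum_ite_eq' Finset.univ l]
  simp

lemma z_mem_I {n : ℕ} (g : Fin n → R) (f : R) {J I : Ideal R}
    (hJ : J = Ideal.span (Set.range g)) (hI : I = J ⊔ Ideal.span {f}) (j : Fin (n + 1)) :
    (Fin.snoc g f : Fin (n + 1) → R) j ∈ I := by
  rcases eq_or_ne j (Fin.last n) with rfl | h
  · rw [Fin.snoc_last, hI]
    exact Submodule.mem_sup_right (Ideal.mem_span_singleton_self f)
  · obtain ⟨j', rfl⟩ := Fin.exists_castSucc_eq.mpr h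
    rw [Fin.snoc_castSucc, hI]
    exact Submodule.mem_sup_left (hJ ▸ Ideal.subset_span ⟨j', rfl⟩)

lemma z_mem_J {n : ℕ} (g : Fin n → R) (f : R) {J : Ideal R}
    (hJ : J = Ideal.span (Set.range g)) {j : Fin (n + 1)} (h : j ≠ Fin.last n) :
    (Fin.snoc g f : Fin (n + 1) → R) j ∈ J := by
  obtain ⟨j', rfl⟩ := Fin.exists_castSucc_eq.mpr h
  rw [Fin.snoc_castSucc, hJ]
  exact Ideal.subset_span ⟨j', rfl⟩

lemma kosB1_last {n : ℕ} (g : Fin n → R) (f : R) {J I : Ideal R}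
    (hJ : J = Ideal.span (Set.range g)) (d : ℕ) {v : Fin (n + 1) → R}
    (hv : v ∈ kosB1 I (Fin.snoc g f) d) : v (Fin.last n) ∈ J * I ^ (d - 2) := by
  classical
  have : kosB1 I (Fin.snoc g f) d ≤
      Submodule.comap (LinearMap.proj (Fin.last n) : (Fin (n+1) → R) →ₗ[R] R)
        ((J * I ^ (d - 2) : Ideal R) : Submodule R R) := by
    rw [kosB1, Submodule.span_le]
    rintro w ⟨j, l, u, hu, rfl⟩
    simp only [SetLike.mem_coe, Submodule.mem_comap, LinearMap.proj_apply, Pi.sub_apply]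
    rw [Pi.single_apply, Pi.single_apply]
    rcases eq_or_ne (Fin.last n) l with hl | hl <;> rcases eq_or_ne (Fin.last n) j with hj | hj
    · simp [← hl, ← hj]
    · rw [if_pos hl, if_neg hj]
      have : (Fin.snoc g f : Fin (n + 1) → R) j ∈ J := z_mem_J g f hJ (Ne.symm hj)
      exact sub_mem (Ideal.mul_mem_mul this hu) (zero_mem _)
    · rw [if_neg hl, if_pos hj]
      have : (Fin.snoc g f : Fin (n + 1) → R) l ∈ J := z_mem_J g f hJ (Ne.symm hl)
      exact sub_mem (zero_mem _) (Ideal.mul_mem_mul this hu)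
    · rw [if_neg hl, if_neg hj]
      simp
  exact this hv

lemma keyK {n : ℕ} (g : Fin n → R) (f : R) {J I : Ideal R}
    (hJ : J = Ideal.span (Set.range g)) (hI : I = J ⊔ Ideal.span {f}) (e : ℕ)
    (hT' : ∀ i : ℕ, (hi : i < n) →
      Submodule.colon (Jpart (Fin.snoc g f) i * I ^ (e + 1))
          (Ideal.span {(Fin.snoc g f : Fin (n + 1) → R) (⟨i, Nat.lt_succ_of_lt hi⟩ : Fin (n + 1))})
        ⊓ I ^ (e + 1) ≤ Jpart (Fin.snoc g f) i * I ^ e) :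
    ∀ i : ℕ, i ≤ n → ∀ a : Fin (n + 1) → R, (∀ j, a j ∈ I ^ (e + 1)) →
      (∀ j : Fin (n + 1), i ≤ (j : ℕ) → a j = 0) →
      (∑ j, a j * (Fin.snoc g f : Fin (n + 1) → R) j = 0) → a ∈ kosB1 I (Fin.snoc g f) (e + 2) := by
  classical
  set z : Fin (n + 1) → R := (Fin.snoc g f : Fin (n + 1) → R) with hz
  intro i
  induction i with
  | zero =>
    intro _ a _ h0 _
    have : a = 0 := funext fun j => h0 j (Nat.zero_le _)
    rw [this]
    exact zero_mem _
  | succ i IH =>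
    intro hi a ha h0 hrel
    have hin : i < n := by omega
    set ii : Fin (n + 1) := ⟨i, by omega⟩ with hii
    have hiival : (ii : ℕ) = i := rfl
    -- the relation gives a ii * z ii ∈ Jpart z i * I^(e+1)
    have hsplit : ∑ j ∈ Finset.univ.erase ii, a j * z j + a ii * z ii = 0 := by
      rw [Finset.sum_erase_add _ _ (Finset.mem_univ ii)]
      exact hrel
    have hmem : ∑ j ∈ Finset.univ.erase ii, a j * z j ∈ Jpart z i * I ^ (e + 1) := by
      refine Submodule.sum_mem _ fun j hj => ?_
      have hjne : j ≠ ii := (Finset.mem_erase.mp hj).1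
      by_cases h : (j : ℕ) < i
      · have hzj : z j ∈ Jpart z i := by
          rw [Jpart]
          exact Ideal.subset_span ⟨j, h, rfl⟩
        rw [mul_comm (a j) (z j)]
        exact Ideal.mul_mem_mul hzj (ha j)
      · have : a j = 0 := by
          refine h0 j ?_
          rcases Nat.lt_or_ge (j : ℕ) (i + 1) with h' | h'
          · exact absurd (Fin.ext (by omega) : j = ii) hjne -- uses hiival
          · exact h'
        simp [this]
    have haii : a ii ∈ Jpart z i * I ^ e := by
      refine hT' i hin ?_
      rw [Submodule.mem_inf]
      refine ⟨Submodule.mem_colon_span_singleton.mpr ?_, ha ii⟩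
      rw [smul_eq_mul]
      have : a ii * z ii = -∑ j ∈ Finset.univ.erase ii, a j * z j :=
        eq_neg_of_add_eq_zero_right hsplit
      rw [this]
      exact neg_mem hmem
    obtain ⟨c, hcK, hc0, hcsum⟩ := mem_Jpart_mul z i (by omega) (I ^ e) haii
    set S : Fin (n + 1) → (Fin (n + 1) → R) :=
      fun j => Pi.single ii (z j * c j) - Pi.single j (z ii * c j) with hS
    set b : Fin (n + 1) → R := a - ∑ j, S j with hb
    have hSB : ∀ j, S j ∈ kosB1 I z (e + 2) := fun j => boundary_mem (hcK j) j ii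
    have hbeval : ∀ j', b j' = a j' - (if j' = ii then a ii else 0) + z ii * c j' := by
      intro j'
      have h1 : (∑ j, S j) j' = ∑ j, S j j' := Finset.sum_apply j' _ _
      have h2 : ∀ j, S j j' = (if j' = ii then z j * c j else 0) -
          (if j' = j then z ii * c j else 0) := by
        intro j
        rw [hS]
        simp only [Pi.sub_apply]
        rw [Pi.single_apply, Pi.single_apply]
      have h3 : ∑ j, S j j' = (if j' = ii then a ii else 0) - z ii * c j' := by
        rw [Finset.sum_congr rfl fun j _ => h2 j, Finset.sum_sub_distrib]
        congr 1
        · by_cases h : j' = ii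
          · simp only [if_pos h]
            rw [hcsum]
          · simp only [if_neg h, Finset.sum_const_zero]
        · have : ∀ j : Fin (n+1), (if j' = j then z ii * c j else 0)
              = (if j = j' then z ii * c j else 0) := by
            intro j; congr 1; exact propext ⟨Eq.symm, Eq.symm⟩
          rw [Finset.sum_congr rfl fun j _ => this j, Finset.sum_ite_eq' Finset.univ j']
          simp
      rw [hb]
      simp only [Pi.sub_apply, h1, h3]
      ring
    have hbmem : ∀ j', b j' ∈ I ^ (e + 1) := by
      intro j'
      rw [hbeval j']
      refine add_mem (sub_mem (ha j') ?_) ?_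
      · split
        · exact ha ii
        · exact zero_mem _
      · rw [pow_succ']
        exact Ideal.mul_mem_mul (z_mem_I g f hJ hI ii) (hcK j')
    have hb0 : ∀ j' : Fin (n + 1), i ≤ (j' : ℕ) → b j' = 0 := by
      intro j' hj'
      rw [hbeval j', hc0 j' hj']
      by_cases h : j' = ii
      · rw [if_pos h, h]
        ring
      · have : a j' = 0 := by
          refine h0 j' ?_
          have : (j' : ℕ) ≠ i := fun hc => h (Fin.ext hc)
          omega
        rw [if_neg h, this]
        ring
    have hbrel : ∑ j, b j * z j = 0 := by
      have hTdot : ∀ k, ∑ j', S k j' * z j' = 0 := by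
        intro k
        rw [hS]
        simp only [Pi.sub_apply, sub_mul]
        rw [Finset.sum_sub_distrib, single_dot, single_dot]
        ring
      have : ∑ j', (∑ k, S k) j' * z j' = 0 := by
        have : ∀ j', (∑ k, S k) j' * z j' = ∑ k, S k j' * z j' := by
          intro j'
          rw [Finset.sum_apply]
          exact Finset.sum_mul _ _ _
        rw [Finset.sum_congr rfl fun j' _ => this j', Finset.sum_comm]
        rw [Finset.sum_congr rfl fun k _ => hTdot k, Finset.sum_const_zero]
      rw [hb]
      simp only [Pi.sub_apply, sub_mul]
      rw [Finset.sum_sub_distrib, hrel, this, sub_zero]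
    have hbB : b ∈ kosB1 I z (e + 2) := IH (by omega) b hbmem hb0 hbrel
    have : a = b + ∑ j, S j := by rw [hb]; ring
    rw [this]
    exact add_mem hbB (Submodule.sum_mem _ fun j _ => hSB j)

lemma keyK0 {n : ℕ} (g : Fin n → R) (f : R) {J I : Ideal R}
    (hJ : J = Ideal.span (Set.range g)) (hI : I = J ⊔ Ideal.span {f}) (e : ℕ)
    (hT' : ∀ i : ℕ, (hi : i < n) →
      Submodule.colon (Jpart (Fin.snoc g f) i * I ^ (e + 1))
          (Ideal.span {(Fin.snoc g f : Fin (n + 1) → R) (⟨i, Nat.lt_succ_of_lt hi⟩ : Fin (n + 1))})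
        ⊓ I ^ (e + 1) ≤ Jpart (Fin.snoc g f) i * I ^ e)
    (a : Fin (n + 1) → R) (haZ : a ∈ kosZ1 I (Fin.snoc g f) (e + 2))
    (hlast : a (Fin.last n) ∈ J * I ^ e) : a ∈ kosB1 I (Fin.snoc g f) (e + 2) := by
  classical
  set z : Fin (n + 1) → R := (Fin.snoc g f : Fin (n + 1) → R) with hz
  obtain ⟨ha, hrel⟩ := mem_kosZ1.mp haZ
  have ha' : ∀ j, a j ∈ I ^ (e + 1) := ha
  rw [hJ] at hlast
  obtain ⟨u, huK, husum⟩ := mem_span_range_mul g (I ^ e) hlast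
  set S : Fin n → (Fin (n + 1) → R) := fun j =>
    Pi.single (Fin.last n) (z j.castSucc * u j) - Pi.single j.castSucc (z (Fin.last n) * u j)
    with hS
  have hSB : ∀ j, S j ∈ kosB1 I z (e + 2) := fun j => boundary_mem (huK j) j.castSucc (Fin.last n)
  set b : Fin (n + 1) → R := a - ∑ j, S j with hb
  have hsum_last : (∑ j, S j) (Fin.last n) = a (Fin.last n) := by
    rw [Finset.sum_apply]
    have : ∀ j : Fin n, S j (Fin.last n) = g j * u j := by
      intro j
      rw [hS]
      simp only [Pi.sub_apply]
      rw [Pi.single_apply, Pi.single_apply, if_pos rfl,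
        if_neg (Fin.castSucc_lt_last j).ne', sub_zero, hz, Fin.snoc_castSucc]
    rw [Finset.sum_congr rfl fun j _ => this j, husum]
  have hsum_cast : ∀ j0 : Fin n, (∑ j, S j) j0.castSucc = -(z (Fin.last n) * u j0) := by
    intro j0
    rw [Finset.sum_apply]
    have : ∀ j : Fin n, S j j0.castSucc =
        -(if j = j0 then z (Fin.last n) * u j else 0) := by
      intro j
      rw [hS]
      simp only [Pi.sub_apply]
      rw [Pi.single_apply, Pi.single_apply, if_neg (Fin.castSucc_lt_last j0).ne, zero_sub]
      congr 1
      by_cases h : j = j0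
      · rw [if_pos h, if_pos (by rw [Fin.castSucc_inj]; exact h.symm)]
      · rw [if_neg h, if_neg (by rw [Fin.castSucc_inj]; exact fun hc => h hc.symm)]
    rw [Finset.sum_congr rfl fun j _ => this j, Finset.sum_neg_distrib,
      Finset.sum_ite_eq' Finset.univ j0]
    simp
  have hbl : b (Fin.last n) = 0 := by
    rw [hb]
    simp only [Pi.sub_apply, hsum_last]
    ring
  have hbc : ∀ j0 : Fin n, b j0.castSucc = a j0.castSucc + z (Fin.last n) * u j0 := by
    intro j0
    rw [hb]
    simp only [Pi.sub_apply, hsum_cast j0]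
    ring
  have hbmem : ∀ j', b j' ∈ I ^ (e + 1) := by
    intro j'
    rcases eq_or_ne j' (Fin.last n) with rfl | h
    · rw [hbl]; exact zero_mem _
    · obtain ⟨j0, rfl⟩ := Fin.exists_castSucc_eq.mpr h
      rw [hbc j0]
      refine add_mem (ha' _) ?_
      rw [pow_succ']
      exact Ideal.mul_mem_mul (z_mem_I g f hJ hI _) (huK j0)
  have hb0 : ∀ j' : Fin (n + 1), n ≤ (j' : ℕ) → b j' = 0 := by
    intro j' hj'
    have : j' = Fin.last n := Fin.ext (by have := j'.2; simp only [Fin.val_last]; omega)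
    rw [this, hbl]
  have hbrel : ∑ j, b j * z j = 0 := by
    have hTdot : ∀ k : Fin n, ∑ j', S k j' * z j' = 0 := by
      intro k
      rw [hS]
      simp only [Pi.sub_apply, sub_mul]
      rw [Finset.sum_sub_distrib, single_dot, single_dot]
      ring
    have hdot : ∑ j', (∑ k, S k) j' * z j' = 0 := by
      have : ∀ j', (∑ k, S k) j' * z j' = ∑ k, S k j' * z j' := by
        intro j'
        rw [Finset.sum_apply]
        exact Finset.sum_mul _ _ _
      rw [Finset.sum_congr rfl fun j' _ => this j', Finset.sum_comm]
      rw [Finset.sum_congr rfl fun k _ => hTdot k, Finset.sum_const_zero]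
    rw [hb]
    simp only [Pi.sub_apply, sub_mul]
    rw [Finset.sum_sub_distrib, hrel, hdot, sub_zero]
  have hbB : b ∈ kosB1 I z (e + 2) := keyK g f hJ hI e hT' n le_rfl b hbmem hb0 hbrel
  have : a = b + ∑ j, S j := by rw [hb]; ring
  rw [this]
  exact add_mem hbB (Submodule.sum_mem _ fun j _ => hSB j)

lemma mainIso {n : ℕ} (g : Fin n → R) (f : R) {J I : Ideal R}
    (hJ : J = Ideal.span (Set.range g)) (hI : I = J ⊔ Ideal.span {f}) (e : ℕ)
    (hT' : ∀ i : ℕ, (hi : i < n) →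
      Submodule.colon (Jpart (Fin.snoc g f) i * I ^ (e + 1))
          (Ideal.span {(Fin.snoc g f : Fin (n + 1) → R) (⟨i, Nat.lt_succ_of_lt hi⟩ : Fin (n + 1))})
        ⊓ I ^ (e + 1) ≤ Jpart (Fin.snoc g f) i * I ^ e) :
    Nonempty (
      (↥(kosZ1 I (Fin.snoc g f) (e + 2)) ⧸
        (Submodule.comap (kosZ1 I (Fin.snoc g f) (e + 2)).subtype
          (kosB1 I (Fin.snoc g f) (e + 2)))) ≃ₗ[R]
      (↥(Submodule.colon (J * I ^ (e + 1)) (Ideal.span {f ^ (e + 2)})) ⧸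
        (Submodule.comap
          (Submodule.subtype ((Submodule.colon (J * I ^ (e + 1)) (Ideal.span {f ^ (e + 2)}) :
            Ideal R) : Submodule R R))
          ((Submodule.colon (J * I ^ e) (Ideal.span {f ^ (e + 1)}) : Ideal R) :
            Submodule R R)))) := by
  classical
  set z : Fin (n + 1) → R := (Fin.snoc g f : Fin (n + 1) → R) with hzdef
  have hfI : f ∈ I := hI ▸ Submodule.mem_sup_right (Ideal.mem_span_singleton_self f)
  set Z : Submodule R (Fin (n + 1) → R) := kosZ1 I z (e + 2) with hZ
  set A : Ideal R := Submodule.colon (J * I ^ (e + 1)) (Ideal.span {f ^ (e + 2)}) with hA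
  set Bc : Ideal R := Submodule.colon (J * I ^ e) (Ideal.span {f ^ (e + 1)}) with hB
  have hpow := pow_eq_aux J f I hI
  -- existence of a representative
  have hex : ∀ a : Z, ∃ x : R, (a : Fin (n + 1) → R) (Fin.last n) - x * f ^ (e + 1) ∈
      J * I ^ e := by
    intro a
    have hm : (a : Fin (n + 1) → R) (Fin.last n) ∈ I ^ (e + 1) := (mem_kosZ1.mp a.2).1 _
    rw [hpow e] at hm
    obtain ⟨w, hw, y, hy, hwy⟩ := Submodule.mem_sup.mp hm
    obtain ⟨x, hx⟩ := Ideal.mem_span_singleton'.mp hy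
    exact ⟨x, by rw [← hwy, ← hx]; simpa using hw⟩
  have huniq : ∀ (coef x y : R), coef - x * f ^ (e + 1) ∈ J * I ^ e →
      coef - y * f ^ (e + 1) ∈ J * I ^ e →
      (Submodule.Quotient.mk x : R ⧸ (Bc : Submodule R R)) = Submodule.Quotient.mk y := by
    intro coef x y h1 h2
    rw [Submodule.Quotient.eq]
    refine Submodule.mem_colon_span_singleton.mpr ?_
    rw [smul_eq_mul]
    have : (x - y) * f ^ (e + 1) = (coef - y * f ^ (e + 1)) - (coef - x * f ^ (e + 1)) := by
      ring
    rw [this]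
    exact sub_mem h2 h1
  let θ : Z →ₗ[R] (R ⧸ (Bc : Submodule R R)) :=
    { toFun := fun a => Submodule.Quotient.mk (Classical.choose (hex a))
      map_add' := by
        intro a b
        have ha := Classical.choose_spec (hex a)
        have hb := Classical.choose_spec (hex b)
        have hab := Classical.choose_spec (hex (a + b))
        have hcoord : ((a + b : Z) : Fin (n + 1) → R) (Fin.last n) =
            (a : Fin (n + 1) → R) (Fin.last n) + (b : Fin (n + 1) → R) (Fin.last n) := rfl
        have h2 : ((a + b : Z) : Fin (n + 1) → R) (Fin.last n) -
            (Classical.choose (hex a) + Classical.choose (hex b)) * f ^ (e + 1) ∈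
            J * I ^ e := by
          rw [hcoord]
          have : (a : Fin (n + 1) → R) (Fin.last n) + (b : Fin (n + 1) → R) (Fin.last n) -
              (Classical.choose (hex a) + Classical.choose (hex b)) * f ^ (e + 1) =
              ((a : Fin (n + 1) → R) (Fin.last n) - Classical.choose (hex a) * f ^ (e + 1)) +
              ((b : Fin (n + 1) → R) (Fin.last n) - Classical.choose (hex b) * f ^ (e + 1)) := by
            ring
          rw [this]
          exact add_mem ha hb
        have := huniq _ _ _ hab h2
        rw [this, Submodule.Quotient.mk_add]
      map_smul' := by
        intro r a
        have ha := Classical.choose_spec (hex a)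
        have hra := Classical.choose_spec (hex (r • a))
        have hcoord : ((r • a : Z) : Fin (n + 1) → R) (Fin.last n) =
            r * (a : Fin (n + 1) → R) (Fin.last n) := rfl
        have h2 : ((r • a : Z) : Fin (n + 1) → R) (Fin.last n) -
            (r * Classical.choose (hex a)) * f ^ (e + 1) ∈ J * I ^ e := by
          rw [hcoord]
          have : r * (a : Fin (n + 1) → R) (Fin.last n) -
              r * Classical.choose (hex a) * f ^ (e + 1) =
              r * ((a : Fin (n + 1) → R) (Fin.last n) -
                Classical.choose (hex a) * f ^ (e + 1)) := by ring
          rw [this]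
          exact Submodule.smul_mem _ r ha
        have := huniq _ _ _ hra h2
        rw [this, show r * Classical.choose (hex a) = r • Classical.choose (hex a) from rfl,
          Submodule.Quotient.mk_smul]
        simp only [RingHom.id_apply] }
  have thetaApply : ∀ (a : Z) (x : R),
      (a : Fin (n + 1) → R) (Fin.last n) - x * f ^ (e + 1) ∈ J * I ^ e →
      θ a = Submodule.Quotient.mk x := by
    intro a x hx
    exact huniq _ _ _ (Classical.choose_spec (hex a)) hx
  -- the kernel
  have hker : LinearMap.ker θ = Submodule.comap Z.subtype (kosB1 I z (e + 2)) := by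
    ext a
    simp only [LinearMap.mem_ker, Submodule.mem_comap, Submodule.subtype_apply]
    constructor
    · intro h
      have hx : Classical.choose (hex a) ∈ Bc := (Submodule.Quotient.mk_eq_zero _).mp h
      have hxf : Classical.choose (hex a) * f ^ (e + 1) ∈ J * I ^ e := by
        have := Submodule.mem_colon_span_singleton.mp hx
        rwa [smul_eq_mul] at this
      have hlast : (a : Fin (n + 1) → R) (Fin.last n) ∈ J * I ^ e := by
        have := add_mem (Classical.choose_spec (hex a)) hxf
        simpa using this
      exact keyK0 g f hJ hI e hT' (a : Fin (n + 1) → R) a.2 hlast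
    · intro h
      have hlast : (a : Fin (n + 1) → R) (Fin.last n) ∈ J * I ^ e :=
        kosB1_last g f hJ (e + 2) h
      have hx : Classical.choose (hex a) ∈ Bc := by
        refine Submodule.mem_colon_span_singleton.mpr ?_
        rw [smul_eq_mul]
        have := sub_mem hlast (Classical.choose_spec (hex a))
        simpa using this
      exact (Submodule.Quotient.mk_eq_zero _).mpr hx
  -- the range
  have hrange : LinearMap.range θ =
      Submodule.map (Bc : Submodule R R).mkQ (A : Submodule R R) := by
    ext q
    constructor
    · rintro ⟨a, rfl⟩
      have hspec := Classical.choose_spec (hex a)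
      set x := Classical.choose (hex a) with hxdef
      refine Submodule.mem_map.mpr ⟨x, ?_, rfl⟩
      -- x ∈ A
      refine Submodule.mem_colon_span_singleton.mpr ?_
      rw [smul_eq_mul]
      have hrel : ∑ j, (a : Fin (n + 1) → R) j * z j = 0 := (mem_kosZ1.mp a.2).2
      have hsplit : ∑ j ∈ Finset.univ.erase (Fin.last n),
          (a : Fin (n + 1) → R) j * z j + (a : Fin (n + 1) → R) (Fin.last n) * z (Fin.last n)
          = 0 := by
        rw [Finset.sum_erase_add _ _ (Finset.mem_univ _)]
        exact hrel
      have hlastf : (a : Fin (n + 1) → R) (Fin.last n) * f ∈ J * I ^ (e + 1) := by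
        have hzlast : z (Fin.last n) = f := by rw [hzdef]; simp
        have h1 : (a : Fin (n + 1) → R) (Fin.last n) * f =
            -∑ j ∈ Finset.univ.erase (Fin.last n), (a : Fin (n + 1) → R) j * z j := by
          rw [← hzlast]
          exact eq_neg_of_add_eq_zero_right hsplit
        rw [h1]
        refine neg_mem (Submodule.sum_mem _ fun j hj => ?_)
        have hjne : j ≠ Fin.last n := (Finset.mem_erase.mp hj).1
        rw [mul_comm ((a : Fin (n + 1) → R) j) (z j)]
        exact Ideal.mul_mem_mul (z_mem_J g f hJ hjne) ((mem_kosZ1.mp a.2).1 j)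
      have hwf : ((a : Fin (n + 1) → R) (Fin.last n) - x * f ^ (e + 1)) * f ∈
          J * I ^ (e + 1) := by
        have : J * I ^ e * I = J * I ^ (e + 1) := by rw [mul_assoc, ← pow_succ]
        rw [← this]
        exact Ideal.mul_mem_mul hspec hfI
      have : x * f ^ (e + 2) = (a : Fin (n + 1) → R) (Fin.last n) * f -
          ((a : Fin (n + 1) → R) (Fin.last n) - x * f ^ (e + 1)) * f := by
        ring
      rw [this]
      exact sub_mem hlastf hwf
    · rintro ⟨x, hxA, rfl⟩
      have hxf : x * f ^ (e + 2) ∈ J * I ^ (e + 1) := by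
        have := Submodule.mem_colon_span_singleton.mp hxA
        rwa [smul_eq_mul] at this
      rw [hJ] at hxf
      obtain ⟨c, hcK, hcsum⟩ := mem_span_range_mul g (I ^ (e + 1)) hxf
      set a : Fin (n + 1) → R := Fin.snoc (fun j => -(c j)) (x * f ^ (e + 1)) with hadef
      have haZ : a ∈ Z := by
        rw [hZ]
        refine mem_kosZ1.mpr ⟨?_, ?_⟩
        · intro j
          rcases eq_or_ne j (Fin.last n) with rfl | h
          · rw [hadef]
            simp only [Fin.snoc_last]
            exact Ideal.mul_mem_left _ x (pow_mem_pow hfI (e + 1))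
          · obtain ⟨j0, rfl⟩ := Fin.exists_castSucc_eq.mpr h
            rw [hadef]
            simp only [Fin.snoc_castSucc]
            exact neg_mem (hcK j0)
        · rw [Fin.sum_univ_castSucc]
          have h1 : ∀ j0 : Fin n, a j0.castSucc * z j0.castSucc = -(g j0 * c j0) := by
            intro j0
            rw [hadef, hzdef]
            simp only [Fin.snoc_castSucc]
            ring
          have h2 : a (Fin.last n) * z (Fin.last n) = x * f ^ (e + 2) := by
            rw [hadef, hzdef]
            simp only [Fin.snoc_last]
            rw [mul_assoc, ← pow_succ]
          rw [Finset.sum_congr rfl fun j _ => h1 j, h2, Finset.sum_neg_distrib, ← hcsum]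
          ring
      have : θ ⟨a, haZ⟩ = Submodule.Quotient.mk x := by
        refine thetaApply ⟨a, haZ⟩ x ?_
        show a (Fin.last n) - x * f ^ (e + 1) ∈ J * I ^ e
        have : a (Fin.last n) = x * f ^ (e + 1) := by rw [hadef]; simp
        rw [this]
        simp
      exact ⟨⟨a, haZ⟩, this⟩
  -- assemble the equivalences
  let φ : ↥(A : Submodule R R) →ₗ[R] (R ⧸ (Bc : Submodule R R)) :=
    (Bc : Submodule R R).mkQ.comp (A : Submodule R R).subtype
  have hrφ : LinearMap.range φ = Submodule.map (Bc : Submodule R R).mkQ (A : Submodule R R) := by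
    rw [LinearMap.range_comp, Submodule.range_subtype]
  have hkφ : LinearMap.ker φ = Submodule.comap (A : Submodule R R).subtype
      (Bc : Submodule R R) := by
    rw [LinearMap.ker_comp, Submodule.ker_mkQ]
  exact ⟨(Submodule.quotEquivOfEq _ _ hker.symm).trans
    ((θ.quotKerEquivRange).trans
      (((LinearEquiv.ofEq _ _ (hrange.trans hrφ.symm)).trans
        φ.quotKerEquivRange.symm).trans
          (Submodule.quotEquivOfEq _ _ hkφ)))⟩

theorem stmt12 {R : Type*} [CommRing R] [IsNoetherianRing R] [IsLocalRing R]
    {n : ℕ} (hn : 2 ≤ n) (g : Fin n → R) (f : R)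
    (hg : ∀ i, g i ∈ IsLocalRing.maximalIdeal R) (hf : f ∈ IsLocalRing.maximalIdeal R)
    (J I : Ideal R) (hJ : J = Ideal.span (Set.range g)) (hI : I = J ⊔ Ideal.span {f})
    (hT : ∀ d : ℕ, 2 ≤ d → ∀ i : ℕ, ∀ (hi1 : 1 ≤ i) (hi2 : i ≤ n),
        Submodule.colon (Jpart (Fin.snoc g f) (i - 1) * I ^ (d - 1))
            (Ideal.span {(Fin.snoc g f : Fin (n + 1) → R) (⟨i - 1, by omega⟩ : Fin (n + 1))})
          ⊓ I ^ (d - 1) ≤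
          Jpart (Fin.snoc g f) (i - 1) * I ^ (d - 2)) :
    (∀ d : ℕ, 2 ≤ d →
        Nonempty (kosH1 I (Fin.snoc g f : Fin (n + 1) → R) d ≃ₗ[R]
          idealQuot (Submodule.colon (J * I ^ (d - 1)) (Ideal.span {f ^ d}))
            (Submodule.colon (J * I ^ (d - 2)) (Ideal.span {f ^ (d - 1)})))) ∧
    ((∃ r : ℕ, I ^ (r + 1) = J * I ^ r) →
      relationTypeKoszul I (Fin.snoc g f : Fin (n + 1) → R) = reductionNumber J I + 1) := by
  classical
  have hfI : f ∈ I := hI ▸ Submodule.mem_sup_right (Ideal.mem_span_singleton_self f)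
  have hT' : ∀ e : ℕ, ∀ i : ℕ, (hi : i < n) →
      Submodule.colon (Jpart (Fin.snoc g f) i * I ^ (e + 1))
          (Ideal.span {(Fin.snoc g f : Fin (n + 1) → R) (⟨i, Nat.lt_succ_of_lt hi⟩ : Fin (n + 1))})
        ⊓ I ^ (e + 1) ≤ Jpart (Fin.snoc g f) i * I ^ e := by
    intro e i hi
    exact hT (e + 2) (by omega) (i + 1) (by omega) (by omega)
  have partA : ∀ d : ℕ, 2 ≤ d →
      Nonempty (kosH1 I (Fin.snoc g f : Fin (n + 1) → R) d ≃ₗ[R]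
        idealQuot (Submodule.colon (J * I ^ (d - 1)) (Ideal.span {f ^ d}))
          (Submodule.colon (J * I ^ (d - 2)) (Ideal.span {f ^ (d - 1)}))) := by
    intro d hd
    obtain ⟨e, rfl⟩ : ∃ e, d = e + 2 := ⟨d - 2, by omega⟩
    exact mainIso g f hJ hI e (hT' e)
  refine ⟨partA, ?_⟩
  rintro ⟨r, hr⟩
  have hS : {r : ℕ | I ^ (r + 1) = J * I ^ r}.Nonempty := ⟨r, hr⟩
  set r₀ : ℕ := reductionNumber J I with hr₀def
  have hr₀ : I ^ (r₀ + 1) = J * I ^ r₀ := Nat.sInf_mem hS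
  have hup : ∀ k, I ^ (r₀ + 1 + k) = J * I ^ (r₀ + k) := by
    intro k
    induction k with
    | zero => exact hr₀
    | succ k ih =>
      calc I ^ (r₀ + 1 + (k + 1)) = I ^ (r₀ + 1 + k) * I := by ring
        _ = J * I ^ (r₀ + k) * I := by rw [ih]
        _ = J * I ^ (r₀ + k + 1) := by rw [mul_assoc, ← pow_succ]
  have hupge : ∀ s, r₀ ≤ s → I ^ (s + 1) = J * I ^ s := by
    intro s hs
    obtain ⟨k, rfl⟩ := Nat.exists_eq_add_of_le hs
    have := hup k
    rwa [show r₀ + 1 + k = r₀ + k + 1 by omega] at this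
  -- vanishing criterion
  have hvan : ∀ e : ℕ,
      (kosZ1 I (Fin.snoc g f) (e + 2) ≤ kosB1 I (Fin.snoc g f) (e + 2)) ↔
      (Submodule.colon (J * I ^ (e + 1)) (Ideal.span {f ^ (e + 2)}) ≤
        Submodule.colon (J * I ^ e) (Ideal.span {f ^ (e + 1)})) := by
    intro e
    obtain ⟨φ⟩ := mainIso g f hJ hI e (hT' e)
    constructor
    · intro h
      have h1 : Submodule.comap (kosZ1 I (Fin.snoc g f) (e + 2)).subtype
          (kosB1 I (Fin.snoc g f) (e + 2)) = ⊤ := Submodule.comap_subtype_eq_top.mpr h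
      have h2 := Submodule.Quotient.subsingleton_iff.mpr h1
      have h3 := Equiv.subsingleton φ.symm.toEquiv
      exact Submodule.comap_subtype_eq_top.mp
        (Submodule.Quotient.subsingleton_iff.mp h3)
    · intro h
      have h1 : Submodule.comap
          (Submodule.subtype ((Submodule.colon (J * I ^ (e + 1)) (Ideal.span {f ^ (e + 2)}) :
            Ideal R) : Submodule R R))
          ((Submodule.colon (J * I ^ e) (Ideal.span {f ^ (e + 1)}) : Ideal R) :
            Submodule R R) = ⊤ := Submodule.comap_subtype_eq_top.mpr h
      have h2 := Submodule.Quotient.subsingleton_iff.mpr h1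
      have h3 := Equiv.subsingleton φ.toEquiv
      exact Submodule.comap_subtype_eq_top.mp
        (Submodule.Quotient.subsingleton_iff.mp h3)
  have claim1 : (r₀ + 1) ∈ {L : ℕ | 1 ≤ L ∧ ∀ d : ℕ, L + 1 ≤ d →
      kosZ1 I (Fin.snoc g f : Fin (n + 1) → R) d ≤
        kosB1 I (Fin.snoc g f : Fin (n + 1) → R) d} := by
    refine ⟨by omega, ?_⟩
    intro d hd
    obtain ⟨e, rfl⟩ : ∃ e, d = e + 2 := ⟨d - 2, by omega⟩
    refine (hvan e).mpr ?_
    intro x _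
    refine Submodule.mem_colon_span_singleton.mpr ?_
    rw [smul_eq_mul, ← hupge e (by omega)]
    exact Ideal.mul_mem_left _ x (pow_mem_pow hfI (e + 1))
  have claim2 : ∀ L ∈ {L : ℕ | 1 ≤ L ∧ ∀ d : ℕ, L + 1 ≤ d →
      kosZ1 I (Fin.snoc g f : Fin (n + 1) → R) d ≤
        kosB1 I (Fin.snoc g f : Fin (n + 1) → R) d}, r₀ + 1 ≤ L := by
    rintro L ⟨hL1, hLv⟩
    by_contra hc
    push_neg at hc
    have hLr : L ≤ r₀ := by omega
    have hr₀1 : 1 ≤ r₀ := le_trans hL1 hLr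
    have hZB := hLv ((r₀ - 1) + 2) (by omega)
    have hAB := (hvan (r₀ - 1)).mp hZB
    have h1A : (1 : R) ∈ Submodule.colon (J * I ^ ((r₀ - 1) + 1))
        (Ideal.span {f ^ ((r₀ - 1) + 2)}) := by
      refine Submodule.mem_colon_span_singleton.mpr ?_
      rw [one_smul]
      have h2 : f ^ ((r₀ - 1) + 2) ∈ I ^ ((r₀ - 1) + 2) := pow_mem_pow hfI _
      rwa [show (r₀ - 1) + 2 = (r₀ - 1 + 1) + 1 by omega, hupge (r₀ - 1 + 1) (by omega)] at h2
    have h1B := hAB h1A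
    have hfr : f ^ r₀ ∈ J * I ^ (r₀ - 1) := by
      have := Submodule.mem_colon_span_singleton.mp h1B
      rw [one_smul] at this
      rwa [show r₀ = (r₀ - 1) + 1 by omega]
    have hIr : I ^ ((r₀ - 1) + 1) = J * I ^ (r₀ - 1) := by
      rw [pow_eq_aux J f I hI (r₀ - 1)]
      exact sup_eq_left.mpr ((Ideal.span_singleton_le_iff_mem _).mpr
        (by rwa [show (r₀ - 1) + 1 = r₀ by omega]))
    have : r₀ ≤ r₀ - 1 := Nat.sInf_le hIr
    omega
  rw [relationTypeKoszul]
  exact le_antisymm (Nat.sInf_le claim1) (le_csInf ⟨_, claim1⟩ claim2)
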